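/- Let d be a pseudometric on ℕ₀³ with λ ∈ (0, 1/3) satisfying the coordinatewise λ-contraction property. Let {i₁,i₂,i₃} = {1,2,3} and let S = {α + m·e_{i₁} + n·e_{i₂} : m,n ∈ ℕ₀} be a quarter-plane of diameter D, with R = inf_{s∈S} ρ(s). If D(1−λ²) < (1−4λ)R, then there exists a 3-way set (a translated octant β + ℕ₀³) of diameter at most 2λ( (2/(1−λ))D + ((1+2λ)/(1−λ))R ). -/

import Mathlib

/-- The grid ℕ₀³. -/
abbrev Grid : Type := Fin 3 → ℕ

/-- Standard basis vector eᵢ. -/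
def e (i : Fin 3) : Grid := fun j => if j = i then 1 else 0

/-- ρ(x) = max of the three distances to successors. -/
noncomputable def rho (d : Grid → Grid → ℝ) (x : Grid) : ℝ :=
  max (d x (x + e 0)) (max (d x (x + e 1)) (d x (x + e 2)))

/-- A 1-way sequence: consecutive differences are basis vectors. -/
def OneWay (s : ℕ → Grid) : Prop := ∀ n, ∃ i, s (n + 1) = s n + e i

/-- Cauchy with respect to the pseudometric d. -/
def IsCauchySeq (d : Grid → Grid → ℝ) (s : ℕ → Grid) : Prop :=
  ∀ ε > (0 : ℝ), ∃ N, ∀ m ≥ N, ∀ n ≥ N, d (s m) (s n) < ε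

/-- d is a pseudometric. -/
def Pseudo (d : Grid → Grid → ℝ) : Prop :=
  (∀ x, d x x = 0) ∧ (∀ x y, 0 ≤ d x y) ∧ (∀ x y, d x y = d y x) ∧
    (∀ x y z, d x z ≤ d x y + d y z)

/-- The coordinatewise λ-contraction property. -/
def Contractive (d : Grid → Grid → ℝ) (lam : ℝ) : Prop :=
  ∀ a b : Grid, ∃ i : Fin 3, d (a + e i) (b + e i) ≤ lam * d a b

/-- A 2-way set: each element has exactly two of its three successors inside. -/
def TwoWaySet (S : Set Grid) : Prop :=
  ∀ s ∈ S, ∃ i : Fin 3, s + e i ∉ S ∧ ∀ j : Fin 3, j ≠ i → s + e j ∈ S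

lemma third3 : ∀ (i₁ i₂ : Fin 3), i₁ ≠ i₂ →
    ∃ i₃ : Fin 3, i₁ ≠ i₃ ∧ i₂ ≠ i₃ ∧ ∀ j : Fin 3, j = i₁ ∨ j = i₂ ∨ j = i₃ := by decide

/-- chain bound sequence anchored at the layer-1 diameter -/
noncomputable def aaS (lam D R : ℝ) : ℕ → ℝ
  | 0 => 2 * lam * (R + D)
  | n + 1 => lam * (aaS lam D R n + ((1 + lam) * D + (1 + 2 * lam) * R))

/-- column climbing bound sequence -/
noncomputable def hhS (lam D R : ℝ) : ℕ → ℝ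
  | 0 => 0
  | n + 1 => lam * (hhS lam D R n + ((1 + lam) * D + (1 + 2 * lam) * R))

set_option maxHeartbeats 1000000 in
theorem stmt11 (d : Grid → Grid → ℝ) (lam : ℝ) (h0 : 0 < lam) (h1 : lam < 1/3)
    (hd : Pseudo d) (hc : Contractive d lam)
    (α : Grid) (i₁ i₂ : Fin 3) (hii : i₁ ≠ i₂) (D R : ℝ)
    (hD : ∀ m n m' n' : ℕ,
      d (α + m • e i₁ + n • e i₂) (α + m' • e i₁ + n' • e i₂) ≤ D)
    (hR : IsGLB (rho d '' {s : Grid | ∃ m n : ℕ, s = α + m • e i₁ + n • e i₂}) R)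
    (hcond : D * (1 - lam ^ 2) < (1 - 4 * lam) * R) :
    ∃ β : Grid, ∀ k k' : Grid,
      d (β + k) (β + k') ≤ 2 * lam * ((2 / (1 - lam)) * D + ((1 + 2 * lam) / (1 - lam)) * R) := by
  obtain ⟨i₃, h13, h23, htri⟩ := third3 i₁ i₂ hii
  obtain ⟨hd0, hdnn, hdsym, hdtri⟩ := hd
  have hl1 : lam < 1 := by linarith
  have h1l : 0 < 1 - lam := by linarith
  -- the quadrant parametrization
  set T : ℕ → ℕ → ℕ → Grid := fun a b c => α + a • e i₁ + b • e i₂ + c • e i₃ with hT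
  have Tu : ∀ a b c, T a b c + e i₁ = T (a + 1) b c := by
    intro a b c; funext j
    simp only [hT, Pi.add_apply, Pi.smul_apply, smul_eq_mul]
    ring
  have Tv : ∀ a b c, T a b c + e i₂ = T a (b + 1) c := by
    intro a b c; funext j
    simp only [hT, Pi.add_apply, Pi.smul_apply, smul_eq_mul]
    ring
  have Tw : ∀ a b c, T a b c + e i₃ = T a b (c + 1) := by
    intro a b c; funext j
    simp only [hT, Pi.add_apply, Pi.smul_apply, smul_eq_mul]
    ring
  have T0 : ∀ a b, T a b 0 = α + a • e i₁ + b • e i₂ := by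
    intro a b; funext j
    simp only [hT, Pi.add_apply, Pi.smul_apply, smul_eq_mul]
    ring
  have hD' : ∀ a b a' b', d (T a b 0) (T a' b' 0) ≤ D := by
    intro a b a' b'; rw [T0, T0]; exact hD a b a' b'
  have hD0 : 0 ≤ D := by have h := hD 0 0 0 0; rwa [hd0] at h
  have e_le_rho : ∀ (x : Grid) (j : Fin 3), d x (x + e j) ≤ rho d x := by
    intro x j
    fin_cases j
    · exact le_max_left _ _
    · exact le_trans (le_max_left _ _) (le_max_right _ _)
    · exact le_trans (le_max_right _ _) (le_max_right _ _)
  have hR0 : 0 ≤ R := by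
    refine hR.2 ?_
    rintro x ⟨s, -, rfl⟩
    exact le_trans (hdnn s (s + e 0)) (e_le_rho s 0)
  have h1sq : 0 < 1 - lam ^ 2 := by nlinarith
  have hRpos : 0 < R := by
    rcases lt_or_eq_of_le hR0 with h | h
    · exact h
    · exfalso; rw [← h] at hcond
      linarith only [hcond, mul_nonneg hD0 h1sq.le]
  have hl4 : 4 * lam < 1 := by
    by_contra hcon
    push_neg at hcon
    have hx : 0 ≤ (4 * lam - 1) * R := mul_nonneg (by linarith) hR0
    linarith only [hcond, hx, mul_nonneg hD0 h1sq.le]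
  have hRD : D * (1 + lam) < R * (1 - lam) := by
    by_contra hcon
    push_neg at hcon
    have h' := mul_le_mul_of_nonneg_left hcon h1l.le
    have h'' : 0 ≤ (2 * lam + lam ^ 2) * R := mul_nonneg (by nlinarith) hR0
    nlinarith [hcond, h', h'']
  have hDR : D < R := by
    by_contra hcon
    push_neg at hcon
    have h' := mul_le_mul_of_nonneg_right hcon (show (0:ℝ) ≤ 1 + lam by linarith)
    have h'' : 0 ≤ 2 * lam * R := by positivity
    linarith only [hRD, h', h'']
  have h3lam : 3 * lam * D < (1 - 4 * lam) * R := by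
    have hq : (0:ℝ) ≤ 1 - lam ^ 2 - 3 * lam := by nlinarith
    linarith only [hcond, mul_nonneg hD0 hq]
  -- the epsilon of approximation of the infimum
  set eps : ℝ := (R * (1 - lam) - D * (1 + lam)) / (2 * lam) with heps
  have hepspos : 0 < eps := by
    rw [heps]; exact div_pos (by linarith) (by linarith)
  have hepm : lam * eps * 2 = R * (1 - lam) - D * (1 + lam) := by
    rw [heps]; field_simp
  have hm : lam * (R + eps + D) < R - D := by nlinarith [hepm, hRD, hD0, h0]
  -- vertical edges on the quadrant are at least R
  have flb : ∀ a b : ℕ, R ≤ d (T a b 0) (T a b 1) := by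
    intro a b
    have hmem : R ≤ rho d (T a b 0) := by
      apply hR.1
      exact ⟨T a b 0, ⟨a, b, T0 a b⟩, rfl⟩
    have h2 : rho d (T a b 0) ≤ max D (d (T a b 0) (T a b 1)) := by
      have key : ∀ j : Fin 3, d (T a b 0) (T a b 0 + e j) ≤ max D (d (T a b 0) (T a b 1)) := by
        intro j
        rcases htri j with rfl | rfl | rfl
        · rw [Tu]; exact le_trans (hD' a b (a+1) b) (le_max_left _ _)
        · rw [Tv]; exact le_trans (hD' a b a (b+1)) (le_max_left _ _)
        · rw [Tw]; exact le_max_right _ _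
      simp only [rho]
      exact max_le (key 0) (max_le (key 1) (key 2))
    rcases le_max_iff.mp (hmem.trans h2) with h | h
    · linarith
    · exact h
  -- near-minimizers exist
  have anchor : ∀ δ : ℝ, 0 < δ → ∃ a b : ℕ, d (T a b 0) (T a b 1) < R + δ := by
    intro δ hδ
    by_contra hcon
    push_neg at hcon
    have hlb : R + δ ∈ lowerBounds
        (rho d '' {s : Grid | ∃ m n : ℕ, s = α + m • e i₁ + n • e i₂}) := by
      rintro x ⟨s, ⟨m, n, rfl⟩, rfl⟩
      have h2 := e_le_rho (T m n 0) i₃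
      rw [Tw] at h2
      have h3 := hcon m n
      have h4 : T m n 0 = α + m • e i₁ + n • e i₂ := T0 m n
      rw [← h4]
      exact le_trans h3 h2
    have := hR.2 hlb
    linarith
  -- forced contraction in the third direction
  have L1 : ∀ a b c a' b' c',
      lam * d (T a b c) (T a' b' c') < d (T (a+1) b c) (T (a'+1) b' c') →
      lam * d (T a b c) (T a' b' c') < d (T a (b+1) c) (T a' (b'+1) c') →
      d (T a b (c+1)) (T a' b' (c'+1)) ≤ lam * d (T a b c) (T a' b' c') := by
    intro a b c a' b' c' hx hy
    obtain ⟨i, hi⟩ := hc (T a b c) (T a' b' c')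
    rcases htri i with rfl | rfl | rfl
    · rw [Tu, Tu] at hi; linarith
    · rw [Tv, Tv] at hi; linarith
    · rwa [Tw, Tw] at hi
  -- base estimates at the delta level
  have base : ∀ δ : ℝ, 0 < δ → δ ≤ eps →
      (∀ a b a' b', d (T a b 1) (T a' b' 1) ≤ 2 * lam * (R + D) + 2 * lam * δ) ∧
      (∀ a b, d (T a b 0) (T a b 1) ≤ ((1 + lam) * D + (1 + 2 * lam) * R) + (1 + 2 * lam) * δ) := by
    intro δ hδ hδe
    obtain ⟨as, bs, hfs⟩ := anchor δ hδ
    have hlamD : 0 ≤ lam * D := mul_nonneg h0.le hD0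
    have hlamδ : lam * δ ≤ lam * eps := mul_le_mul_of_nonneg_left hδe h0.le
    -- forced vertical contraction at the near-minimizer
    have hv : d (T as bs 1) (T as bs 2) ≤ lam * d (T as bs 0) (T as bs 1) := by
      have hlt : lam * d (T as bs 0) (T as bs 1) < lam * (R + δ) :=
        mul_lt_mul_of_pos_left hfs h0
      refine L1 as bs 0 as bs 1 ?_ ?_
      · have hfl := flb (as+1) bs
        linarith only [hlt, hlamδ, hlamD, hm, hD0, hfl]
      · have hfl := flb as (bs+1)
        linarith only [hlt, hlamδ, hlamD, hm, hD0, hfl]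
    -- forced contraction of the pair (anchor + w, quadrant point)
    have hstep : ∀ a b, d (T as bs 2) (T a b 1) ≤ lam * (d (T as bs 0) (T as bs 1) + D) := by
      intro a b
      have hxy : d (T as bs 1) (T a b 0) ≤ d (T as bs 0) (T as bs 1) + D := by
        have t1 := hdtri (T as bs 1) (T as bs 0) (T a b 0)
        have t2 := hdsym (T as bs 1) (T as bs 0)
        have t3 := hD' as bs a b
        linarith
      have hlt : lam * d (T as bs 1) (T a b 0) < R - D := by
        have h5 : lam * d (T as bs 1) (T a b 0) ≤ lam * (d (T as bs 0) (T as bs 1) + D) :=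
          mul_le_mul_of_nonneg_left hxy h0.le
        have h6 := mul_lt_mul_of_pos_left hfs h0
        linarith only [h5, h6, hlamδ, hm]
      have key := L1 as bs 1 a b 0 ?_ ?_
      · exact le_trans key (mul_le_mul_of_nonneg_left hxy h0.le)
      · -- translate by e i₁ : lower bound R - D
        have l1 := flb (as+1) bs
        have l2 := hdtri (T (as+1) bs 0) (T (a+1) b 0) (T (as+1) bs 1)
        have l3 := hD' (as+1) bs (a+1) b
        have l4 := hdsym (T (a+1) b 0) (T (as+1) bs 1)
        linarith only [l1, l2, l3, l4, hlt]
      · have l1 := flb as (bs+1)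
        have l2 := hdtri (T as (bs+1) 0) (T a (b+1) 0) (T as (bs+1) 1)
        have l3 := hD' as (bs+1) a (b+1)
        have l4 := hdsym (T a (b+1) 0) (T as (bs+1) 1)
        linarith only [l1, l2, l3, l4, hlt]
    constructor
    · intro a b a' b'
      have q1 := hstep a b
      have q2 := hstep a' b'
      have q3 := hdsym (T as bs 2) (T a b 1)
      have q4 := hdtri (T a b 1) (T as bs 2) (T a' b' 1)
      have hp := mul_lt_mul_of_pos_left hfs h0
      linarith only [q1, q2, q3, q4, hp]
    · intro a b
      have t1 := hdtri (T a b 0) (T as bs 0) (T a b 1)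
      have t2 := hdtri (T as bs 0) (T as bs 1) (T a b 1)
      have t3 := hdtri (T as bs 1) (T as bs 2) (T a b 1)
      have t4 := hD' a b as bs
      have t5 := hstep a b
      have hp := mul_lt_mul_of_pos_left hfs h0
      linarith only [t1, t2, t3, t4, t5, hp, hv, hfs, hlamD, hlamδ]
  -- exact limit versions
  have fb : ∀ a b, d (T a b 0) (T a b 1) ≤ (1 + lam) * D + (1 + 2 * lam) * R := by
    intro a b
    by_contra hcon
    push_neg at hcon
    set g : ℝ := d (T a b 0) (T a b 1) - ((1 + lam) * D + (1 + 2 * lam) * R) with hg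
    have hgpos : 0 < g := by rw [hg]; linarith
    have hy : 0 < g / (2 + 2 * lam) := div_pos hgpos (by linarith)
    have hmin : 0 < min eps (g / (2 + 2 * lam)) := lt_min hepspos hy
    obtain ⟨-, h2⟩ := base _ hmin (min_le_left _ _)
    have h3 := h2 a b
    have h7 : g / (2 + 2 * lam) * (2 + 2 * lam) = g := div_mul_cancel₀ _ (by linarith)
    have h8 : min eps (g / (2 + 2 * lam)) ≤ g / (2 + 2 * lam) := min_le_right _ _
    have h9 : (1 + 2 * lam) * min eps (g / (2 + 2 * lam))
        ≤ (1 + 2 * lam) * (g / (2 + 2 * lam)) :=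
      mul_le_mul_of_nonneg_left h8 (by linarith)
    nlinarith [h3, h7, h9, hy, hgpos]
  have A1 : ∀ a b a' b', d (T a b 1) (T a' b' 1) ≤ 2 * lam * (R + D) := by
    intro a b a' b'
    by_contra hcon
    push_neg at hcon
    set g : ℝ := d (T a b 1) (T a' b' 1) - 2 * lam * (R + D) with hg
    have hgpos : 0 < g := by rw [hg]; linarith
    have hy : 0 < g / (2 * lam + 1) := div_pos hgpos (by linarith)
    have hmin : 0 < min eps (g / (2 * lam + 1)) := lt_min hepspos hy
    obtain ⟨h2, -⟩ := base _ hmin (min_le_left _ _)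
    have h3 := h2 a b a' b'
    have h7 : g / (2 * lam + 1) * (2 * lam + 1) = g := div_mul_cancel₀ _ (by linarith)
    have h8 : min eps (g / (2 * lam + 1)) ≤ g / (2 * lam + 1) := min_le_right _ _
    have h9 : 2 * lam * min eps (g / (2 * lam + 1)) ≤ 2 * lam * (g / (2 * lam + 1)) :=
      mul_le_mul_of_nonneg_left h8 (by linarith)
    nlinarith [h3, h7, h9, hy, hgpos]
  -- numeric helpers
  have hr1nn : 0 ≤ (1 + lam) * D + (1 + 2 * lam) * R := by nlinarith
  have hf1 : (1 + lam) * (2 * lam * (R + D)) + lam * ((1 + lam) * D + (1 + 2 * lam) * R) < R := by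
    have h' := mul_lt_mul_of_pos_left h3lam (show (0:ℝ) < 1 + lam by linarith)
    nlinarith [h']
  have h2lam : 2 * lam * D < (1 - 4 * lam) * R := by
    linarith only [h3lam, mul_nonneg h0.le hD0]
  have key2 : 2 * lam * ((1 + lam) * D + (1 + 2 * lam) * R) < R * (1 - lam) := by
    have h' := mul_lt_mul_of_pos_left h2lam (show (0:ℝ) < 1 + lam by linarith)
    nlinarith [h']
  have force_cond : ∀ n, (1 + lam) * aaS lam D R n
      + lam * ((1 + lam) * D + (1 + 2 * lam) * R) < R := by
    intro n
    induction n with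
    | zero => simpa [aaS] using hf1
    | succ n ih =>
      simp only [aaS]
      have h' := mul_lt_mul_of_pos_left ih h0
      nlinarith [h', key2]
  -- the main simultaneous induction
  have main : ∀ n, (∀ a b a' b', d (T a b (n+1)) (T a' b' 1) ≤ aaS lam D R n) ∧
      (∀ a b, d (T a b (n+1)) (T a b 1) ≤ hhS lam D R n) := by
    intro n
    induction n with
    | zero =>
      constructor
      · intro a b a' b'
        simpa [aaS] using A1 a b a' b'
      · intro a b
        simp [hhS, hd0]
    | succ n ih =>
      obtain ⟨ihA, ihX⟩ := ih
      have hup : ∀ a b a' b', d (T a b (n+1)) (T a' b' 0)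
          ≤ aaS lam D R n + ((1 + lam) * D + (1 + 2 * lam) * R) := by
        intro a b a' b'
        have t1 := hdtri (T a b (n+1)) (T a' b' 1) (T a' b' 0)
        have t2 := hdsym (T a' b' 1) (T a' b' 0)
        have t3 := fb a' b'
        have t4 := ihA a b a' b'
        linarith
      have F : ∀ a b a' b', d (T a b (n+1+1)) (T a' b' 1)
          ≤ lam * d (T a b (n+1)) (T a' b' 0) := by
        intro a b a' b'
        have fc := force_cond n
        have hupp := hup a b a' b'
        have hlam_up : lam * d (T a b (n+1)) (T a' b' 0)
            ≤ lam * (aaS lam D R n + ((1 + lam) * D + (1 + 2 * lam) * R)) :=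
          mul_le_mul_of_nonneg_left hupp h0.le
        refine L1 a b (n+1) a' b' 0 ?_ ?_
        · have l1 := flb (a'+1) b'
          have l2 := hdtri (T (a'+1) b' 0) (T (a+1) b (n+1)) (T (a'+1) b' 1)
          have l3 := ihA (a+1) b (a'+1) b'
          have l4 := hdsym (T (a'+1) b' 0) (T (a+1) b (n+1))
          linarith
        · have l1 := flb a' (b'+1)
          have l2 := hdtri (T a' (b'+1) 0) (T a (b+1) (n+1)) (T a' (b'+1) 1)
          have l3 := ihA a (b+1) a' (b'+1)
          have l4 := hdsym (T a' (b'+1) 0) (T a (b+1) (n+1))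
          linarith
      constructor
      · intro a b a' b'
        have h5 := F a b a' b'
        have h6 := hup a b a' b'
        have h7 : lam * d (T a b (n+1)) (T a' b' 0)
            ≤ lam * (aaS lam D R n + ((1 + lam) * D + (1 + 2 * lam) * R)) :=
          mul_le_mul_of_nonneg_left h6 h0.le
        calc d (T a b (n+1+1)) (T a' b' 1) ≤ lam * d (T a b (n+1)) (T a' b' 0) := h5
          _ ≤ lam * (aaS lam D R n + ((1 + lam) * D + (1 + 2 * lam) * R)) := h7
          _ = aaS lam D R (n+1) := by simp [aaS]
      · intro a b
        have h5 := F a b a b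
        have h6 : d (T a b (n+1)) (T a b 0)
            ≤ hhS lam D R n + ((1 + lam) * D + (1 + 2 * lam) * R) := by
          have t1 := hdtri (T a b (n+1)) (T a b 1) (T a b 0)
          have t2 := hdsym (T a b 1) (T a b 0)
          have t3 := fb a b
          have t4 := ihX a b
          linarith
        have h7 : lam * d (T a b (n+1)) (T a b 0)
            ≤ lam * (hhS lam D R n + ((1 + lam) * D + (1 + 2 * lam) * R)) :=
          mul_le_mul_of_nonneg_left h6 h0.le
        calc d (T a b (n+1+1)) (T a b 1) ≤ lam * d (T a b (n+1)) (T a b 0) := h5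
          _ ≤ lam * (hhS lam D R n + ((1 + lam) * D + (1 + 2 * lam) * R)) := h7
          _ = hhS lam D R (n+1) := by simp [hhS]
  -- closed forms
  have hhCF : ∀ n, hhS lam D R n * (1 - lam)
      = (lam - lam ^ (n+1)) * ((1 + lam) * D + (1 + 2 * lam) * R) := by
    intro n
    induction n with
    | zero => simp [hhS]
    | succ n ih =>
      simp only [hhS]
      linear_combination lam * ih
  have aaCF : ∀ n, aaS lam D R n * (1 - lam)
      = lam ^ n * (2 * lam * (R + D)) * (1 - lam)
        + (lam - lam ^ (n+1)) * ((1 + lam) * D + (1 + 2 * lam) * R) := by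
    intro n
    induction n with
    | zero => simp [aaS]
    | succ n ih =>
      simp only [aaS]
      linear_combination lam * ih
  -- the final numeric inequality
  have NI : ∀ n n', n ≤ n' → hhS lam D R n + aaS lam D R n'
      ≤ 2 * lam * ((2 / (1 - lam)) * D + ((1 + 2 * lam) / (1 - lam)) * R) := by
    intro n n' hnn'
    have hq0 : 0 < lam ^ (n'+1) := pow_pos h0 _
    have hqp : lam ^ (n'+1) ≤ lam ^ (n+1) :=
      pow_le_pow_of_le_one h0.le hl1.le (by omega)
    refine le_of_mul_le_mul_right ?_ h1l
    have hB : 2 * lam * ((2 / (1 - lam)) * D + ((1 + 2 * lam) / (1 - lam)) * R) * (1 - lam)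
        = 2 * lam * (2 * D + (1 + 2 * lam) * R) := by
      field_simp
    rw [add_mul, hhCF n, aaCF n', hB]
    have hsub : lam ^ n' * (2 * lam * (R + D)) * (1 - lam)
        = 2 * lam ^ (n'+1) * (R + D) * (1 - lam) := by
      rw [pow_succ]; ring
    rw [hsub]
    have t1 : 0 ≤ (lam ^ (n+1) - lam ^ (n'+1)) * ((1 + lam) * D + (1 + 2 * lam) * R) :=
      mul_nonneg (by linarith) hr1nn
    have t2 : 0 ≤ lam ^ (n'+1) * (3 * lam * R + 2 * lam * D) :=
      mul_nonneg hq0.le (by nlinarith [mul_pos h0 hRpos, mul_nonneg h0.le hD0])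
    have t3 : 0 ≤ lam * (1 - lam) * D := mul_nonneg (mul_nonneg h0.le h1l.le) hD0
    linarith only [t1, t2, t3]
  -- conclusion
  refine ⟨α + e i₃, ?_⟩
  have dec : ∀ kk : Grid, α + e i₃ + kk = T (kk i₁) (kk i₂) (kk i₃ + 1) := by
    intro kk
    funext j
    rcases htri j with rfl | rfl | rfl <;>
      simp [hT, e, Pi.add_apply, Pi.smul_apply, smul_eq_mul, hii, h13, h23,
        hii.symm, h13.symm, h23.symm, Ne.symm] <;> omega
  intro k k'
  rw [dec k, dec k']
  rcases le_total (k i₃) (k' i₃) with h | h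
  · have m1 := (main (k i₃)).2 (k i₁) (k i₂)
    have m2 := (main (k' i₃)).1 (k' i₁) (k' i₂) (k i₁) (k i₂)
    have tr := hdtri (T (k i₁) (k i₂) (k i₃ + 1)) (T (k i₁) (k i₂) 1)
      (T (k' i₁) (k' i₂) (k' i₃ + 1))
    have sy := hdsym (T (k i₁) (k i₂) 1) (T (k' i₁) (k' i₂) (k' i₃ + 1))
    have ni := NI (k i₃) (k' i₃) h
    linarith
  · rw [hdsym]
    have m1 := (main (k' i₃)).2 (k' i₁) (k' i₂)
    have m2 := (main (k i₃)).1 (k i₁) (k i₂) (k' i₁) (k' i₂)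
    have tr := hdtri (T (k' i₁) (k' i₂) (k' i₃ + 1)) (T (k' i₁) (k' i₂) 1)
      (T (k i₁) (k i₂) (k i₃ + 1))
    have sy := hdsym (T (k' i₁) (k' i₂) 1) (T (k i₁) (k i₂) (k i₃ + 1))
    have ni := NI (k' i₃) (k i₃) h
    linarith
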